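/- arXiv:math/0304057 — 3 statements merged into one kernel-verified Lean document; each statement's English description precedes it below -/
import Mathlib

section
/- The commutator subgroup [G,G] of the group G equals the subgroup generated by g₂² = (0,0,2,0) and g₃² = (0,0,0,2); explicitly, [G,G] = {(0,0,c,d) : c and d are even integers}. -/
open scoped commutatorElement

/-- The underlying set of the group `G` is `ℤ⁴`. -/
def G : Type := ℤ × ℤ × ℤ × ℤ

namespace G

/-- Build an element of `G` from four integers. -/
def mk (a b c d : ℤ) : G := (a, b, c, d)

/-- The twisted multiplication
`(a,b,c,d)·(a',b',c',d') = (a+a', b+b', c+(−1)^a·c', d+(−1)^a·d')`. -/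
def mul' (x y : G) : G :=
  mk (x.1 + y.1) (x.2.1 + y.2.1)
    (x.2.2.1 + (x.1.negOnePow : ℤ) * y.2.2.1)
    (x.2.2.2 + (x.1.negOnePow : ℤ) * y.2.2.2)

/-- The inverse `(a,b,c,d)⁻¹ = (−a, −b, −(−1)^a·c, −(−1)^a·d)`. -/
def inv' (x : G) : G :=
  mk (-x.1) (-x.2.1) (-((x.1.negOnePow : ℤ) * x.2.2.1)) (-((x.1.negOnePow : ℤ) * x.2.2.2))

instance instGroup : Group G where
  mul := mul'
  one := mk 0 0 0 0
  inv := inv'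
  mul_assoc x y z := by
    show mul' (mul' x y) z = mul' x (mul' y z)
    obtain ⟨a, b, c, d⟩ := x
    obtain ⟨a', b', c', d'⟩ := y
    obtain ⟨a'', b'', c'', d''⟩ := z
    simp only [mul', mk, Int.negOnePow_add, Units.val_mul]
    exact Prod.ext (by ring) (Prod.ext (by ring) (Prod.ext (by ring) (by ring)))
  one_mul x := by
    show mul' (mk 0 0 0 0) x = x
    obtain ⟨a, b, c, d⟩ := x
    simp [mul', mk]
    rfl
  mul_one x := by
    show mul' x (mk 0 0 0 0) = x
    obtain ⟨a, b, c, d⟩ := x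
    simp [mul', mk]
    rfl
  inv_mul_cancel x := by
    show mul' (inv' x) x = mk 0 0 0 0
    obtain ⟨a, b, c, d⟩ := x
    simp only [mul', inv', mk, Int.negOnePow_neg]
    exact Prod.ext (by ring) (Prod.ext (by ring) (Prod.ext (by ring) (by ring)))

def g₀ : G := mk 1 0 0 0
def g₁ : G := mk 0 1 0 0
def g₂ : G := mk 0 0 1 0
def g₃ : G := mk 0 0 0 1

/- ### Auxiliary lemmas -/

lemma mul_def (x y : G) : x * y = mul' x y := rfl
lemma inv_def (x : G) : x⁻¹ = inv' x := rfl
lemma one_def : (1 : G) = mk 0 0 0 0 := rfl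

lemma mk_mul_mk (c d c' d' : ℤ) :
    mk 0 0 c d * mk 0 0 c' d' = mk 0 0 (c + c') (d + d') := by
  show mul' _ _ = _
  simp [mul', mk]
  rfl

lemma mk_inv (c d : ℤ) : (mk 0 0 c d)⁻¹ = mk 0 0 (-c) (-d) := by
  show inv' _ = _
  simp [inv', mk]
  rfl

lemma mk_zpow (n : ℤ) (c d : ℤ) : (mk 0 0 c d) ^ n = mk 0 0 (n * c) (n * d) := by
  induction n using Int.induction_on with
  | zero => simp [one_def]
  | succ k ih =>
      rw [zpow_add, zpow_one, ih, mk_mul_mk]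
      congr 2 <;> ring
  | pred k ih =>
      rw [zpow_sub, zpow_one, ih, mk_inv, mk_mul_mk]
      congr 2 <;> ring

lemma even_one_sub_negOnePow (n : ℤ) : Even (1 - (n.negOnePow : ℤ)) := by
  rcases Int.even_or_odd n with h | h
  · rw [Int.negOnePow_even _ h]; simp
  · rw [Int.negOnePow_odd _ h]; decide

lemma commutatorElement_eq (x y : G) :
    ⁅x, y⁆ = mk 0 0
      (x.2.2.1 * (1 - (y.1.negOnePow : ℤ)) - y.2.2.1 * (1 - (x.1.negOnePow : ℤ)))
      (x.2.2.2 * (1 - (y.1.negOnePow : ℤ)) - y.2.2.2 * (1 - (x.1.negOnePow : ℤ))) := by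
  obtain ⟨a, b, c, d⟩ := x
  obtain ⟨a', b', c', d'⟩ := y
  show mul' (mul' (mul' _ _) (inv' _)) (inv' _) = _
  simp only [mul', inv', mk, Int.negOnePow_add, Int.negOnePow_neg, Units.val_mul]
  have he : (a.negOnePow : ℤ) * a.negOnePow = 1 := by
    rw [← Units.val_mul, Int.units_mul_self]; rfl
  have he' : (a'.negOnePow : ℤ) * a'.negOnePow = 1 := by
    rw [← Units.val_mul, Int.units_mul_self]; rfl
  generalize (a.negOnePow : ℤ) = e at he ⊢
  generalize (a'.negOnePow : ℤ) = e' at he' ⊢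
  refine Prod.ext (by ring) (Prod.ext (by ring) (Prod.ext ?_ ?_)) <;> dsimp only
  · linear_combination (-e' * c - e' * e' * c') * he + (-c') * he'
  · linear_combination (-e' * d - e' * e' * d') * he + (-d') * he'

/-- The explicit subgroup `{(0,0,c,d) : c, d even}`. -/
def K : Subgroup G where
  carrier := {x : G | x.1 = 0 ∧ x.2.1 = 0 ∧ Even x.2.2.1 ∧ Even x.2.2.2}
  one_mem' := ⟨rfl, rfl, Even.zero, Even.zero⟩
  mul_mem' := by
    rintro ⟨a, b, c, d⟩ ⟨a', b', c', d'⟩ ⟨ha, hb, hc, hd⟩ ⟨ha', hb', hc', hd'⟩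
    dsimp at ha hb hc hd ha' hb' hc' hd' ⊢
    subst ha hb ha' hb'
    have h := mk_mul_mk c d c' d'
    simp only [mk] at h
    rw [h]
    exact ⟨rfl, rfl, hc.add hc', hd.add hd'⟩
  inv_mem' := by
    rintro ⟨a, b, c, d⟩ ⟨ha, hb, hc, hd⟩
    dsimp at ha hb hc hd ⊢
    subst ha hb
    have h := mk_inv c d
    simp only [mk] at h
    rw [h]
    exact ⟨rfl, rfl, hc.neg, hd.neg⟩

end G

open G in
/-- The commutator subgroup `[G,G]` equals the subgroup generated by
`g₂² = (0,0,2,0)` and `g₃² = (0,0,0,2)`; explicitly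
`[G,G] = {(0,0,c,d) : c and d even}`. -/
theorem G_commutator_eq :
    g₂ ^ 2 = mk 0 0 2 0 ∧ g₃ ^ 2 = mk 0 0 0 2 ∧
    commutator G = Subgroup.closure ({g₂ ^ 2, g₃ ^ 2} : Set G) ∧
    (commutator G : Set G) =
      {x : G | x.1 = 0 ∧ x.2.1 = 0 ∧ Even x.2.2.1 ∧ Even x.2.2.2} := by
  have h2 : g₂ ^ 2 = mk 0 0 2 0 := by
    rw [pow_two]; show mul' g₂ g₂ = _; simp [mul', mk, g₂]; rfl
  have h3 : g₃ ^ 2 = mk 0 0 0 2 := by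
    rw [pow_two]; show mul' g₃ g₃ = _; simp [mul', mk, g₃]; rfl
  -- closure ≤ commutator
  have hcl : Subgroup.closure ({g₂ ^ 2, g₃ ^ 2} : Set G) ≤ commutator G := by
    rw [Subgroup.closure_le]
    rintro x (rfl | rfl)
    · have : ⁅g₂, g₀⁆ = g₂ ^ 2 := by
        rw [commutatorElement_eq, h2]
        simp [g₂, g₀, mk, Int.negOnePow_one]
        rfl
      rw [← this]
      exact Subgroup.commutator_mem_commutator (Subgroup.mem_top _) (Subgroup.mem_top _)
    · have : ⁅g₃, g₀⁆ = g₃ ^ 2 := by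
        rw [commutatorElement_eq, h3]
        simp [g₃, g₀, mk, Int.negOnePow_one]
        rfl
      rw [← this]
      exact Subgroup.commutator_mem_commutator (Subgroup.mem_top _) (Subgroup.mem_top _)
  -- commutator ≤ K
  have hcK : commutator G ≤ K := by
    rw [commutator, Subgroup.commutator_le]
    intro x _ y _
    rw [commutatorElement_eq]
    exact ⟨rfl, rfl,
      ((even_one_sub_negOnePow _).mul_left _).sub ((even_one_sub_negOnePow _).mul_left _),
      ((even_one_sub_negOnePow _).mul_left _).sub ((even_one_sub_negOnePow _).mul_left _)⟩
  -- K ≤ closure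
  have hKcl : K ≤ Subgroup.closure ({g₂ ^ 2, g₃ ^ 2} : Set G) := by
    rintro ⟨a, b, c, d⟩ ⟨ha, hb, ⟨m, hm⟩, ⟨n, hn⟩⟩
    dsimp at ha hb hm hn
    subst ha hb
    have hx : (mk 0 0 c d : G) = (mk 0 0 2 0) ^ m * (mk 0 0 0 2) ^ n := by
      rw [mk_zpow, mk_zpow, mk_mul_mk]
      congr 2 <;> omega
    have hm1 : (g₂ ^ 2 : G) ∈ Subgroup.closure ({g₂ ^ 2, g₃ ^ 2} : Set G) :=
      Subgroup.subset_closure (by left; rfl)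
    have hm2 : (g₃ ^ 2 : G) ∈ Subgroup.closure ({g₂ ^ 2, g₃ ^ 2} : Set G) :=
      Subgroup.subset_closure (by right; rfl)
    show (mk 0 0 c d : G) ∈ _
    rw [hx, ← h2, ← h3]
    exact mul_mem (Subgroup.zpow_mem _ hm1 m) (Subgroup.zpow_mem _ hm2 n)
  have hKeq : commutator G = Subgroup.closure ({g₂ ^ 2, g₃ ^ 2} : Set G) :=
    le_antisymm (hcK.trans hKcl) hcl
  refine ⟨h2, h3, hKeq, ?_⟩
  have hKc : commutator G = K := le_antisymm hcK (hKcl.trans hcl)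
  rw [hKc]; rfl
end

section
/- For all real numbers t₁, t₂ and all signs ε₂, ε₃ ∈ {1, −1}, the map τ : G → U(1) defined by τ(a,b,c,d) = exp(i(a·t₁ + b·t₂)) · ε₂^c · ε₃^d is a group homomorphism, and it is the unique group homomorphism G → U(1) with τ(g₀) = exp(i·t₁), τ(g₁) = exp(i·t₂), τ(g₂) = ε₂, and τ(g₃) = ε₃. -/
namespace Gaux

open G

lemma sign_zpow {ε : Circle} (hε : ε ^ (2:ℤ) = 1) (s c : ℤ) (hs : s = 1 ∨ s = -1) :
    ε ^ (s * c) = ε ^ c := by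
  rcases hs with h | h
  · rw [h, one_mul]
  · rw [h]
    have h2 : ε ^ c * ε ^ c = 1 := by
      rw [← zpow_add, ← two_mul, zpow_mul, hε, one_zpow]
    rw [neg_mul, one_mul, zpow_neg]
    exact inv_eq_of_mul_eq_one_right h2

lemma mul_mk (a b c d a' b' c' d' : ℤ) :
    G.mk a b c d * G.mk a' b' c' d' =
      G.mk (a + a') (b + b') (c + (a.negOnePow : ℤ) * c') (d + (a.negOnePow : ℤ) * d') := rfl

lemma g0_zpow (a : ℤ) : g₀ ^ a = G.mk a 0 0 0 := by
  induction a using Int.induction_on with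
  | zero => rfl
  | succ n ih =>
      rw [zpow_add_one, ih]
      show G.mul' (G.mk n 0 0 0) g₀ = _
      simp [G.mul', G.mk, g₀]
      rfl
  | pred n ih =>
      rw [show (-(n:ℤ) - 1) = -(n:ℤ) - 1 from rfl, zpow_sub_one, ih]
      show G.mul' (G.mk (-n) 0 0 0) (G.inv' g₀) = _
      simp [G.mul', G.inv', G.mk, g₀]
      ring_nf
      rfl

lemma g1_zpow (b : ℤ) : g₁ ^ b = G.mk 0 b 0 0 := by
  induction b using Int.induction_on with
  | zero => rfl
  | succ n ih =>
      rw [zpow_add_one, ih]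
      show G.mul' (G.mk 0 n 0 0) g₁ = _
      simp [G.mul', G.mk, g₁]
      rfl
  | pred n ih =>
      rw [zpow_sub_one, ih]
      show G.mul' (G.mk 0 (-n) 0 0) (G.inv' g₁) = _
      simp [G.mul', G.inv', G.mk, g₁]
      ring_nf
      rfl

lemma g2_zpow (c : ℤ) : g₂ ^ c = G.mk 0 0 c 0 := by
  induction c using Int.induction_on with
  | zero => rfl
  | succ n ih =>
      rw [zpow_add_one, ih]
      show G.mul' (G.mk 0 0 n 0) g₂ = _
      simp [G.mul', G.mk, g₂]
      rfl
  | pred n ih =>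
      rw [zpow_sub_one, ih]
      show G.mul' (G.mk 0 0 (-n) 0) (G.inv' g₂) = _
      simp [G.mul', G.inv', G.mk, g₂]
      ring_nf
      rfl

lemma g3_zpow (d : ℤ) : g₃ ^ d = G.mk 0 0 0 d := by
  induction d using Int.induction_on with
  | zero => rfl
  | succ n ih =>
      rw [zpow_add_one, ih]
      show G.mul' (G.mk 0 0 0 n) g₃ = _
      simp [G.mul', G.mk, g₃]
      rfl
  | pred n ih =>
      rw [zpow_sub_one, ih]
      show G.mul' (G.mk 0 0 0 (-n)) (G.inv' g₃) = _
      simp [G.mul', G.inv', G.mk, g₃]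
      ring_nf
      rfl

lemma decomp (a b c d : ℤ) :
    G.mk a b c d = g₁ ^ b * g₂ ^ c * g₃ ^ d * g₀ ^ a := by
  rw [g0_zpow, g1_zpow, g2_zpow, g3_zpow]
  simp [mul_mk]

end Gaux

open G in
/-- For real `t₁, t₂` and signs `ε₂, ε₃ ∈ {1, −1}`, the map
`(a,b,c,d) ↦ exp(i(a·t₁ + b·t₂))·ε₂^c·ε₃^d` is a group homomorphism `G → U(1)`,
and it is the unique one with `τ(g₀) = exp(i t₁)`, `τ(g₁) = exp(i t₂)`,
`τ(g₂) = ε₂`, `τ(g₃) = ε₃`. -/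
theorem G_circle_representations (t₁ t₂ : ℝ) (ε₂ ε₃ : Circle)
    (hε₂ : (ε₂ : ℂ) = 1 ∨ (ε₂ : ℂ) = -1) (hε₃ : (ε₃ : ℂ) = 1 ∨ (ε₃ : ℂ) = -1) :
    ∃ τ : G →* Circle,
      (∀ a b c d : ℤ,
        τ (mk a b c d) = Circle.exp ((a : ℝ) * t₁ + (b : ℝ) * t₂) * ε₂ ^ c * ε₃ ^ d) ∧
      τ g₀ = Circle.exp t₁ ∧ τ g₁ = Circle.exp t₂ ∧ τ g₂ = ε₂ ∧ τ g₃ = ε₃ ∧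
      ∀ τ' : G →* Circle, τ' g₀ = Circle.exp t₁ → τ' g₁ = Circle.exp t₂ →
        τ' g₂ = ε₂ → τ' g₃ = ε₃ → τ' = τ := by
  classical
  have h2 : ε₂ ^ (2:ℤ) = 1 := by
    have : (ε₂ : ℂ) ^ (2:ℤ) = 1 := by rcases hε₂ with h | h <;> rw [h] <;> norm_num
    exact Subtype.ext (by push_cast; exact_mod_cast this)
  have h3 : ε₃ ^ (2:ℤ) = 1 := by
    have : (ε₃ : ℂ) ^ (2:ℤ) = 1 := by rcases hε₃ with h | h <;> rw [h] <;> norm_num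
    exact Subtype.ext (by push_cast; exact_mod_cast this)
  set f : G → Circle := fun x =>
    Circle.exp ((x.1 : ℝ) * t₁ + (x.2.1 : ℝ) * t₂) * ε₂ ^ x.2.2.1 * ε₃ ^ x.2.2.2 with hf
  have hsign : ∀ a : ℤ, ((a.negOnePow : ℤ) = 1 ∨ (a.negOnePow : ℤ) = -1) := fun a => by
    rcases Int.units_eq_one_or a.negOnePow with h | h <;> [left; right] <;> rw [h] <;> rfl
  have hfmul : ∀ x y : G, f (x * y) = f x * f y := by
    intro x y
    obtain ⟨a, b, c, d⟩ := x
    obtain ⟨a', b', c', d'⟩ := y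
    have e1 : (⟨a, b, c, d⟩ : G) = G.mk a b c d := rfl
    have e2 : (⟨a', b', c', d'⟩ : G) = G.mk a' b' c' d' := rfl
    rw [e1, e2, Gaux.mul_mk, hf]
    simp only [G.mk]
    rw [zpow_add, zpow_add, Gaux.sign_zpow h2 _ _ (hsign a), Gaux.sign_zpow h3 _ _ (hsign a)]
    have hexp : Circle.exp (((a + a' : ℤ) : ℝ) * t₁ + ((b + b' : ℤ) : ℝ) * t₂) =
        Circle.exp ((a : ℝ) * t₁ + (b : ℝ) * t₂) *
          Circle.exp ((a' : ℝ) * t₁ + (b' : ℝ) * t₂) := by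
      rw [← Circle.exp_add]; push_cast; ring_nf
    rw [hexp]
    simp only [mul_assoc, mul_comm, mul_left_comm]
  set τ : G →* Circle := MonoidHom.mk' f hfmul with hτ
  have k0 : τ g₀ = Circle.exp t₁ := by show f g₀ = _; simp [hf, g₀, G.mk]
  have k1 : τ g₁ = Circle.exp t₂ := by show f g₁ = _; simp [hf, g₁, G.mk]
  have k2 : τ g₂ = ε₂ := by show f g₂ = _; simp [hf, g₂, G.mk]
  have k3 : τ g₃ = ε₃ := by show f g₃ = _; simp [hf, g₃, G.mk]
  have key : ∀ σ : G →* Circle, σ g₀ = Circle.exp t₁ → σ g₁ = Circle.exp t₂ →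
      σ g₂ = ε₂ → σ g₃ = ε₃ → ∀ a b c d : ℤ,
      σ (G.mk a b c d) = Circle.exp t₂ ^ b * ε₂ ^ c * ε₃ ^ d * Circle.exp t₁ ^ a := by
    intro σ s0 s1 s2 s3 a b c d
    rw [Gaux.decomp a b c d, map_mul, map_mul, map_mul, map_zpow, map_zpow, map_zpow,
      map_zpow, s0, s1, s2, s3]
  refine ⟨τ, fun a b c d => rfl, k0, k1, k2, k3, ?_⟩
  intro τ' h0 h1 hh2 hh3
  refine MonoidHom.ext fun x => ?_
  obtain ⟨a, b, c, d⟩ := x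
  have hx : (⟨a, b, c, d⟩ : G) = G.mk a b c d := rfl
  rw [hx, key τ' h0 h1 hh2 hh3, key τ k0 k1 k2 k3]
end

section
/- If T is a topological space and τ : T → Hom(G, U(1)) is a family of group homomorphisms such that for every g ∈ G the map t ↦ τ(t)(g) is continuous, then the maps t ↦ τ(t)(g₂) and t ↦ τ(t)(g₃) are locally constant on T. -/
open G in
lemma conj_g2 : g₀ * g₂ * g₀⁻¹ = g₂⁻¹ := by
  show G.mul' (G.mul' g₀ g₂) (G.inv' g₀) = G.inv' g₂
  exact Prod.ext (by decide) (Prod.ext (by decide) (Prod.ext (by decide) (by decide)))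

open G in
lemma conj_g3 : g₀ * g₃ * g₀⁻¹ = g₃⁻¹ := by
  show G.mul' (G.mul' g₀ g₃) (G.inv' g₀) = G.inv' g₃
  exact Prod.ext (by decide) (Prod.ext (by decide) (Prod.ext (by decide) (by decide)))

open G in
lemma sq_one (φ : G →* Circle) (g : G) (h : g₀ * g * g₀⁻¹ = g⁻¹) : (φ g) ^ 2 = 1 := by
  have := congrArg φ h
  simp only [map_mul, map_inv] at this
  have h2 : (φ g)⁻¹ = φ g := by
    rw [← this, mul_comm (φ g₀) (φ g), mul_assoc, mul_inv_cancel, mul_one]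
  calc (φ g)^2 = φ g * φ g := sq (φ g) ▸ rfl
  _ = φ g * (φ g)⁻¹ := by rw [h2]
  _ = 1 := mul_inv_cancel _

lemma loc_const {T : Type*} [TopologicalSpace T] (f : T → Circle)
    (hf : Continuous f) (h2 : ∀ t, (f t) ^ 2 = 1) : IsLocallyConstant f := by
  have key : ∀ t, (f t : ℂ) = 1 ∨ (f t : ℂ) = -1 := by
    intro t
    have : ((f t : ℂ) - 1) * ((f t : ℂ) + 1) = 0 := by
      have := congrArg (Subtype.val) (h2 t)
      push_cast at this
      have h' : (f t : ℂ)^2 = 1 := by exact_mod_cast this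
      linear_combination h'
    rcases mul_eq_zero.mp this with h | h
    · left; linear_combination h
    · right; linear_combination h
  rw [IsLocallyConstant.iff_exists_open]
  intro t
  refine ⟨{y | dist ((f y : ℂ)) ((f t : ℂ)) < 1}, ?_, by simp, ?_⟩
  · exact isOpen_lt (by fun_prop) continuous_const
  · intro y hy
    have hy' : dist ((f y : ℂ)) ((f t : ℂ)) < 1 := hy
    apply Subtype.ext
    rcases key y with h1 | h1 <;> rcases key t with h3 | h3 <;> rw [h1, h3] <;>
      first | rfl | (exfalso; rw [h1, h3] at hy'; simp [Complex.dist_eq] at hy'; norm_num at hy')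


open G in
/-- In a continuous family of `U(1)`-representations of `G`, the images of `g₂` and `g₃`
are locally constant. -/
theorem G_circle_family_locally_constant {T : Type*} [TopologicalSpace T]
    (τ : T → (G →* Circle)) (hcont : ∀ g : G, Continuous fun t => τ t g) :
    IsLocallyConstant (fun t => τ t g₂) ∧ IsLocallyConstant (fun t => τ t g₃) :=
  ⟨loc_const _ (hcont g₂) fun t => sq_one (τ t) g₂ conj_g2,
   loc_const _ (hcont g₃) fun t => sq_one (τ t) g₃ conj_g3⟩
end
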